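/- If P(a) and P(b) are Pauli products both of odd weight, then their commutator is either zero or equal (up to a nonzero scalar) to a Pauli product of odd weight. -/

import Mathlib

open Matrix Complex

noncomputable def pauli : Fin 4 → Matrix (Fin 2) (Fin 2) ℂ
  | 0 => 1
  | 1 => !![0, 1; 1, 0]
  | 2 => !![0, -I; I, 0]
  | 3 => !![1, 0; 0, -1]

/-- Tensor product of Pauli matrices indexed by `a : Fin n → Fin 4`. -/
noncomputable def PauliProd {n : ℕ} (a : Fin n → Fin 4) :
    Matrix (Fin n → Fin 2) (Fin n → Fin 2) ℂ :=
  Matrix.of fun i j => ∏ k, pauli (a k) (i k) (j k)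

/-- Weight: the number of non-identity tensor factors. -/
noncomputable def wt {n : ℕ} (a : Fin n → Fin 4) : ℕ :=
  (Finset.univ.filter fun i => a i ≠ 0).card

/-- Support: the set of qubits on which the Pauli product acts nontrivially. -/
noncomputable def supp {n : ℕ} (a : Fin n → Fin 4) : Finset (Fin n) :=
  Finset.univ.filter fun i => a i ≠ 0

def midx : Fin 4 → Fin 4 → Fin 4
  | 0, 0 => 0
  | 0, 1 => 1
  | 0, 2 => 2
  | 0, 3 => 3
  | 1, 0 => 1
  | 1, 1 => 0
  | 1, 2 => 3
  | 1, 3 => 2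
  | 2, 0 => 2
  | 2, 1 => 3
  | 2, 2 => 0
  | 2, 3 => 1
  | 3, 0 => 3
  | 3, 1 => 2
  | 3, 2 => 1
  | 3, 3 => 0

noncomputable def mcoef : Fin 4 → Fin 4 → ℂ
  | 0, 0 => 1
  | 0, 1 => 1
  | 0, 2 => 1
  | 0, 3 => 1
  | 1, 0 => 1
  | 1, 1 => 1
  | 1, 2 => I
  | 1, 3 => -I
  | 2, 0 => 1
  | 2, 1 => -I
  | 2, 2 => 1
  | 2, 3 => I
  | 3, 0 => 1
  | 3, 1 => I
  | 3, 2 => -I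
  | 3, 3 => 1

def ac (i j : Fin 4) : Prop := i ≠ 0 ∧ j ≠ 0 ∧ i ≠ j

instance : ∀ i j, Decidable (ac i j) := fun _ _ => inferInstanceAs (Decidable (_ ∧ _))

lemma pauli_mul_apply (i j : Fin 4) (x y : Fin 2) :
    ∑ z, pauli i x z * pauli j z y = mcoef i j * pauli (midx i j) x y := by
  fin_cases i <;> fin_cases j <;> fin_cases x <;> fin_cases y <;>
    simp [pauli, mcoef, midx, Fin.sum_univ_two, Matrix.one_apply]

lemma mcoef_ne_zero (i j : Fin 4) : mcoef i j ≠ 0 := by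
  fin_cases i <;> fin_cases j <;> simp [mcoef, Complex.I_ne_zero]

lemma mcoef_swap (i j : Fin 4) : mcoef j i = (if ac i j then -1 else 1) * mcoef i j := by
  fin_cases i <;> fin_cases j <;> simp [mcoef, ac]

lemma midx_comm : ∀ i j : Fin 4, midx j i = midx i j := by decide

lemma parity_pt : ∀ i j : Fin 4,
    (if midx i j ≠ 0 then (1 : ZMod 2) else 0)
      = (if i ≠ 0 then 1 else 0) + (if j ≠ 0 then 1 else 0) + (if ac i j then 1 else 0) := by
  decide

lemma PauliProd_mul {n : ℕ} (a b : Fin n → Fin 4) :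
    PauliProd a * PauliProd b
      = (∏ k, mcoef (a k) (b k)) • PauliProd (fun k => midx (a k) (b k)) := by
  ext i j
  simp only [Matrix.mul_apply, PauliProd, Matrix.of_apply, Matrix.smul_apply, smul_eq_mul]
  calc ∑ m : Fin n → Fin 2, (∏ k, pauli (a k) (i k) (m k)) * ∏ k, pauli (b k) (m k) (j k)
      = ∑ m : Fin n → Fin 2, ∏ k, (pauli (a k) (i k) (m k) * pauli (b k) (m k) (j k)) := by
        simp [Finset.prod_mul_distrib]
    _ = ∏ k, ∑ z, pauli (a k) (i k) z * pauli (b k) z (j k) :=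
        (Fintype.prod_sum fun k z => pauli (a k) (i k) z * pauli (b k) z (j k)).symm
    _ = ∏ k, (mcoef (a k) (b k) * pauli (midx (a k) (b k)) (i k) (j k)) := by
        simp_rw [pauli_mul_apply]
    _ = _ := Finset.prod_mul_distrib

lemma card_filter_cast {n : ℕ} (p : Fin n → Prop) [DecidablePred p] :
    (((Finset.univ.filter p).card : ℕ) : ZMod 2) = ∑ k, if p k then (1 : ZMod 2) else 0 := by
  rw [Finset.card_filter]
  push_cast
  simp

/-- If two Pauli products both have odd weight and their commutator is nonzero,
then their product is a nonzero scalar multiple of an odd-weight Pauli product. -/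
theorem odd_weight_commutator {n : ℕ} (a b : Fin n → Fin 4)
    (ha : Odd (wt a)) (hb : Odd (wt b))
    (hcomm : PauliProd a * PauliProd b - PauliProd b * PauliProd a ≠ 0) :
    ∃ (lam : ℂ) (c : Fin n → Fin 4), lam ≠ 0 ∧ Odd (wt c) ∧
      PauliProd a * PauliProd b = lam • PauliProd c := by
  classical
  set c : Fin n → Fin 4 := fun k => midx (a k) (b k) with hcdef
  set lam : ℂ := ∏ k, mcoef (a k) (b k) with hlamdef
  have hab := PauliProd_mul a b
  have hc : (fun k => midx (b k) (a k)) = c := funext fun k => midx_comm _ _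
  set M : ℕ := (Finset.univ.filter fun k => ac (a k) (b k)).card with hMdef
  have hswap : (∏ k, mcoef (b k) (a k)) = (-1 : ℂ) ^ M * lam := by
    simp_rw [fun k => mcoef_swap (a k) (b k)]
    rw [Finset.prod_mul_distrib, hlamdef]
    congr 1
    have h1 : ∀ k : Fin n, (if ac (a k) (b k) then (-1 : ℂ) else 1)
        = (-1 : ℂ) ^ (if ac (a k) (b k) then 1 else 0) := by
      intro k; split <;> simp
    simp_rw [h1]
    rw [Finset.prod_pow_eq_pow_sum, hMdef, Finset.card_filter]
  have hba : PauliProd b * PauliProd a = ((-1 : ℂ) ^ M * lam) • PauliProd c := by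
    rw [PauliProd_mul b a, hc, hswap]
  have hM : Odd M := by
    by_contra h
    rw [Nat.not_odd_iff_even] at h
    apply hcomm
    rw [hab, hba, h.neg_one_pow, one_mul, sub_self]
  have hlam : lam ≠ 0 :=
    Finset.prod_ne_zero_iff.mpr fun k _ => mcoef_ne_zero _ _
  refine ⟨lam, c, hlam, ?_, hab⟩
  rw [← ZMod.natCast_eq_one_iff_odd]
  have hwc : ((wt c : ℕ) : ZMod 2) = ∑ k, if c k ≠ 0 then (1 : ZMod 2) else 0 := by
    rw [wt]; exact card_filter_cast _
  rw [hwc]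
  have hpt : ∀ k : Fin n, (if c k ≠ 0 then (1 : ZMod 2) else 0)
      = (if a k ≠ 0 then 1 else 0) + (if b k ≠ 0 then 1 else 0)
        + (if ac (a k) (b k) then 1 else 0) := fun k => parity_pt (a k) (b k)
  simp_rw [hpt]
  rw [Finset.sum_add_distrib, Finset.sum_add_distrib]
  have h1 : (∑ k, if a k ≠ 0 then (1 : ZMod 2) else 0) = 1 := by
    rw [← card_filter_cast, ← wt, ZMod.natCast_eq_one_iff_odd]; exact ha
  have h2 : (∑ k, if b k ≠ 0 then (1 : ZMod 2) else 0) = 1 := by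
    rw [← card_filter_cast, ← wt, ZMod.natCast_eq_one_iff_odd]; exact hb
  have h3 : (∑ k, if ac (a k) (b k) then (1 : ZMod 2) else 0) = 1 := by
    rw [← card_filter_cast, ← hMdef, ZMod.natCast_eq_one_iff_odd]; exact hM
  rw [h1, h2, h3]
  decide
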